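/- Let a, b₁, b₂, b₃: ℤ → ℝ be finitely supported real-valued 1D filters such that {a; b₁, b₂, b₃} is a tight 2-framelet filter bank with b̂₁(ω) = e^{−iω}·conj(â(ω+π)) and b̂₃(ω) = e^{−iω}·conj(b̂₂(ω+π)), and let u₁, u₂: ℤ → ℝ be finitely supported with |â(ω)|² + |û₁(ω)|² + |û₂(ω)|² = 1 for all ω ∈ ℝ. With b₀ := a and u₀ := a, define 2D filters b^{2D}_{j,k} for j ∈ {0,1,2,3}, k ∈ {0,1,2} by b̂^{2D}_{2j,k}(ω₁,ω₂) = b̂_{2j}(ω₁)·û_k(ω₂) and b̂^{2D}_{2j+1,k}(ω₁,ω₂) = b̂_{2j+1}(ω₁)·conj(û_k(ω₂+π)) (j ∈ {0,1}), and set a^{2D} := b^{2D}_{0,0}, so that â^{2D}(ω₁,ω₂) = â(ω₁)â(ω₂). Then a^{2D} together with the eleven high-pass filters b^{2D}_{1,0}, b^{2D}_{2,0}, b^{2D}_{3,0}, b^{2D}_{0,1}, b^{2D}_{1,1}, b^{2D}_{2,1}, b^{2D}_{3,1}, b^{2D}_{0,2}, b^{2D}_{1,2}, b^{2D}_{2,2},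 b^{2D}_{3,2} forms a quincunx tight framelet filter bank satisfying b̂^{2D}_{2j+1,k}(ω) = e^{−iω₁}·conj(b̂^{2D}_{2j,k}(ω+(π,π))) for j ∈ {0,1}, k ∈ {0,1,2} (a 6-multiple canonical quincunx tight framelet filter bank). Moreover, if â(0) = 1 and a has order m sum rules with respect to 2, then a^{2D} has at least order 2m sum rules with respect to M_{√2}; and if a(c−k) = a(k) for all k ∈ ℤ for some c ∈ ℤ, then a^{2D} is D₄-symmetric about the point (c/2, c/2). -/

import Mathlib

open Complex Real

/-- Fourier series of a finitely supported 1D filter. -/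
noncomputable def fhat1 (u : ℤ → ℂ) (ω : ℝ) : ℂ :=
  ∑ᶠ k : ℤ, u k * Complex.exp (-(Complex.I) * (k : ℂ) * (ω : ℂ))

/-- Fourier series of a finitely supported 2D filter. -/
noncomputable def fhat2 (a : ℤ × ℤ → ℂ) (ω : ℝ × ℝ) : ℂ :=
  ∑ᶠ k : ℤ × ℤ, a k * Complex.exp (-(Complex.I) * ((k.1 : ℂ) * (ω.1 : ℂ) + (k.2 : ℂ) * (ω.2 : ℂ)))

/-- Order `m` sum rules with respect to `2` for a 1D filter. -/
def SumRules1D (a : ℤ → ℂ) (m : ℕ) : Prop :=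
  fhat1 a 0 = 1 ∧ ∀ j : ℕ, j < m → ∑ᶠ k : ℤ, ((-1 : ℂ) ^ k * a k * (k : ℂ) ^ j) = 0

/-- Order `m` sum rules with respect to the quincunx matrix `M_{√2}` for a 2D filter. -/
def SumRules2D (a : ℤ × ℤ → ℂ) (m : ℕ) : Prop :=
  fhat2 a (0, 0) = 1 ∧ ∀ μ : ℕ × ℕ, μ.1 + μ.2 < m →
    ∑ᶠ k : ℤ × ℤ, ((-1 : ℂ) ^ (k.1 + k.2) * a k * (k.1 : ℂ) ^ μ.1 * (k.2 : ℂ) ^ μ.2) = 0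

/-- The dihedral group `D₄` of eight 2×2 integer matrices (viewed over ℝ). -/
def D4 : Set (Matrix (Fin 2) (Fin 2) ℝ) :=
  {!![1, 0; 0, 1], !![-1, 0; 0, -1], !![1, 0; 0, -1], !![-1, 0; 0, 1],
   !![0, 1; 1, 0], !![0, -1; -1, 0], !![0, 1; -1, 0], !![0, -1; 1, 0]}

/-- `a` is `D₄`-symmetric about the point `c`: `a(E(k−c)+c) = a(k)` for all `k ∈ ℤ²`, `E ∈ D₄`. -/
def D4Symm (a : ℤ × ℤ → ℂ) (c : ℝ × ℝ) : Prop :=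
  ∀ E ∈ D4, ∀ k k' : ℤ × ℤ,
    (![(k'.1 : ℝ), (k'.2 : ℝ)]
      = E.mulVec ![(k.1 : ℝ) - c.1, (k.2 : ℝ) - c.2] + ![c.1, c.2]) →
    a k' = a k

/- ### Auxiliary lemmas -/

lemma fhat1_eq_sum (u : ℤ → ℂ) {s : Finset ℤ} (hs : Function.support u ⊆ s) (ω : ℝ) :
    fhat1 u ω = ∑ k ∈ s, u k * Complex.exp (-(Complex.I) * (k : ℂ) * (ω : ℂ)) := by
  refine finsum_eq_sum_of_support_subset _ (fun k hk => hs ?_)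
  intro h0
  apply hk
  simp [Function.mem_support, h0]

lemma fhat2_eq_sum (f : ℤ × ℤ → ℂ) {s : Finset (ℤ × ℤ)} (hs : Function.support f ⊆ s)
    (ω : ℝ × ℝ) :
    fhat2 f ω = ∑ k ∈ s, f k *
      Complex.exp (-(Complex.I) * ((k.1 : ℂ) * (ω.1 : ℂ) + (k.2 : ℂ) * (ω.2 : ℂ))) := by
  refine finsum_eq_sum_of_support_subset _ (fun k hk => hs ?_)
  intro h0
  apply hk
  simp [Function.mem_support, h0]

lemma fhat2_sub {f g : ℤ × ℤ → ℂ} (hf : (Function.support f).Finite)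
    (hg : (Function.support g).Finite) (ω : ℝ × ℝ) :
    fhat2 (fun k => f k - g k) ω = fhat2 f ω - fhat2 g ω := by
  classical
  set s : Finset (ℤ × ℤ) := hf.toFinset ∪ hg.toFinset with hsdef
  have hfs : Function.support f ⊆ s := by
    intro k hk; simp [hsdef, Set.Finite.mem_toFinset, hk]
  have hgs : Function.support g ⊆ s := by
    intro k hk; simp [hsdef, Set.Finite.mem_toFinset, hk]
  have hfgs : Function.support (fun k => f k - g k) ⊆ s := by
    intro k hk
    by_contra hks
    have h1 : f k = 0 := by by_contra h; exact hks (hfs h)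
    have h2 : g k = 0 := by by_contra h; exact hks (hgs h)
    simp [Function.mem_support, h1, h2] at hk
  rw [fhat2_eq_sum _ hfgs, fhat2_eq_sum f hfs, fhat2_eq_sum g hgs, ← Finset.sum_sub_distrib]
  exact Finset.sum_congr rfl fun k _ => by ring

lemma fhat1_per (u : ℤ → ℂ) (ω : ℝ) : fhat1 u (ω + π + π) = fhat1 u ω := by
  unfold fhat1
  refine finsum_congr fun k => ?_
  congr 1
  have hA : -(Complex.I) * (k : ℂ) * ((ω + π + π : ℝ) : ℂ)
      = -(Complex.I) * (k : ℂ) * (ω : ℂ) + ((-k : ℤ) : ℂ) * (2 * (π : ℂ) * Complex.I) := by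
    push_cast; ring
  rw [hA, Complex.exp_add, Complex.exp_int_mul_two_pi_mul_I, mul_one]

noncomputable def chr (k : ℤ × ℤ) : Multiplicative (ℝ × ℝ) →* ℂ where
  toFun ω := Complex.exp (-(Complex.I) * ((k.1 : ℂ) * ((Multiplicative.toAdd ω).1 : ℂ)
      + (k.2 : ℂ) * ((Multiplicative.toAdd ω).2 : ℂ)))
  map_one' := by simp
  map_mul' x y := by
    rw [← Complex.exp_add]
    congr 1
    simp only [toAdd_mul, Prod.fst_add, Prod.snd_add]
    push_cast
    ring

lemma exp_eq_forall {m n : ℤ}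
    (h : ∀ t : ℝ, Complex.exp (-(Complex.I) * (m : ℂ) * (t : ℂ))
      = Complex.exp (-(Complex.I) * (n : ℂ) * (t : ℂ))) : m = n := by
  by_contra hmn
  have hmn' : (m : ℝ) - n ≠ 0 := sub_ne_zero.2 (by exact_mod_cast hmn)
  set t : ℝ := π / ((m : ℝ) - n) with ht
  have ht' : ((m : ℂ) - n) * (t : ℂ) = (π : ℂ) := by
    have hmn2 : (m : ℂ) - n ≠ 0 := by
      intro h0
      apply hmn'
      exact_mod_cast h0
    rw [ht]
    push_cast
    field_simp
  have h1 : Complex.exp (-(Complex.I) * (m : ℂ) * t - -(Complex.I) * (n : ℂ) * t) = 1 := by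
    rw [Complex.exp_sub, h t, div_self (Complex.exp_ne_zero _)]
  have h2 : -(Complex.I) * (m : ℂ) * t - -(Complex.I) * (n : ℂ) * t = -((π : ℂ) * Complex.I) := by
    linear_combination -Complex.I * ht'
  rw [h2, Complex.exp_neg, Complex.exp_pi_mul_I] at h1
  norm_num at h1

lemma chr_injective : Function.Injective chr := by
  intro k k' h
  have hv : ∀ ω : ℝ × ℝ, Complex.exp (-(Complex.I) * ((k.1 : ℂ) * (ω.1 : ℂ) + (k.2 : ℂ) * (ω.2 : ℂ)))
      = Complex.exp (-(Complex.I) * ((k'.1 : ℂ) * (ω.1 : ℂ) + (k'.2 : ℂ) * (ω.2 : ℂ))) := by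
    intro ω
    have := congrFun (congrArg (fun f : Multiplicative (ℝ × ℝ) →* ℂ =>
      (f : Multiplicative (ℝ × ℝ) → ℂ)) h) (Multiplicative.ofAdd ω)
    simpa [chr] using this
  have h1 : k.1 = k'.1 := by
    refine exp_eq_forall fun t => ?_
    have e1 : -(Complex.I) * (k.1 : ℂ) * (t : ℂ)
        = -(Complex.I) * ((k.1 : ℂ) * ((t : ℝ) : ℂ) + (k.2 : ℂ) * (((0 : ℝ) : ℝ) : ℂ)) := by
      push_cast; ring
    have e2 : -(Complex.I) * (k'.1 : ℂ) * (t : ℂ)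
        = -(Complex.I) * ((k'.1 : ℂ) * ((t : ℝ) : ℂ) + (k'.2 : ℂ) * (((0 : ℝ) : ℝ) : ℂ)) := by
      push_cast; ring
    rw [e1, e2]
    exact hv (t, 0)
  have h2 : k.2 = k'.2 := by
    refine exp_eq_forall fun t => ?_
    have e1 : -(Complex.I) * (k.2 : ℂ) * (t : ℂ)
        = -(Complex.I) * ((k.1 : ℂ) * (((0 : ℝ) : ℝ) : ℂ) + (k.2 : ℂ) * ((t : ℝ) : ℂ)) := by
      push_cast; ring
    have e2 : -(Complex.I) * (k'.2 : ℂ) * (t : ℂ)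
        = -(Complex.I) * ((k'.1 : ℂ) * (((0 : ℝ) : ℝ) : ℂ) + (k'.2 : ℂ) * ((t : ℝ) : ℂ)) := by
      push_cast; ring
    rw [e1, e2]
    exact hv (0, t)
  exact Prod.ext h1 h2

lemma fhat2_zero {f : ℤ × ℤ → ℂ} (hf : (Function.support f).Finite)
    (h : ∀ ω : ℝ × ℝ, fhat2 f ω = 0) : ∀ k, f k = 0 := by
  classical
  have li := (linearIndependent_monoidHom (Multiplicative (ℝ × ℝ)) ℂ).comp chr chr_injective
  rw [linearIndependent_iff'] at li
  intro k
  by_cases hk : k ∈ hf.toFinset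
  · refine li hf.toFinset f ?_ k hk
    funext ω
    have h0 := h (Multiplicative.toAdd ω)
    rw [fhat2_eq_sum f (s := hf.toFinset) (by simp [Set.Finite.coe_toFinset]) _] at h0
    calc (∑ i ∈ hf.toFinset, f i • ((fun j => ((chr j : Multiplicative (ℝ × ℝ) →* ℂ) :
            Multiplicative (ℝ × ℝ) → ℂ)) i)) ω
        = ∑ i ∈ hf.toFinset, f i * chr i ω := by
          rw [Finset.sum_apply]
          exact Finset.sum_congr rfl fun i _ => rfl
      _ = 0 := by rw [← h0]; rfl
  · by_contra h0
    exact hk (hf.mem_toFinset.2 h0)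

lemma fhat2_tensor (u v : ℤ → ℂ) (hu : (Function.support u).Finite)
    (hv : (Function.support v).Finite) (ω : ℝ × ℝ) :
    fhat2 (fun k => u k.1 * v k.2) ω = fhat1 u ω.1 * fhat1 v ω.2 := by
  classical
  have hsub : Function.support (fun k : ℤ × ℤ => u k.1 * v k.2) ⊆
      (hu.toFinset ×ˢ hv.toFinset : Finset (ℤ × ℤ)) := by
    intro k hk
    have h1 : u k.1 ≠ 0 := fun h => by simp [Function.mem_support, h] at hk
    have h2 : v k.2 ≠ 0 := fun h => by simp [Function.mem_support, h] at hk
    simp [Finset.mem_product, Set.Finite.mem_toFinset, h1, h2]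
  rw [fhat2_eq_sum _ hsub, fhat1_eq_sum u (s := hu.toFinset) (by simp) ω.1,
    fhat1_eq_sum v (s := hv.toFinset) (by simp) ω.2, Finset.sum_mul_sum,
    Finset.sum_product]
  refine Finset.sum_congr rfl fun k1 _ => Finset.sum_congr rfl fun k2 _ => ?_
  have : -(Complex.I) * ((k1 : ℂ) * (ω.1 : ℂ) + (k2 : ℂ) * (ω.2 : ℂ))
      = -(Complex.I) * (k1 : ℂ) * (ω.1 : ℂ) + -(Complex.I) * (k2 : ℂ) * (ω.2 : ℂ) := by ring
  rw [this, Complex.exp_add]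
  ring

lemma finsum_tensor (F G : ℤ → ℂ) (hF : (Function.support F).Finite)
    (hG : (Function.support G).Finite) :
    ∑ᶠ k : ℤ × ℤ, F k.1 * G k.2 = (∑ᶠ k : ℤ, F k) * ∑ᶠ k : ℤ, G k := by
  classical
  have hsub : Function.support (fun k : ℤ × ℤ => F k.1 * G k.2) ⊆
      (hF.toFinset ×ˢ hG.toFinset : Finset (ℤ × ℤ)) := by
    intro k hk
    have h1 : F k.1 ≠ 0 := fun h => by simp [Function.mem_support, h] at hk
    have h2 : G k.2 ≠ 0 := fun h => by simp [Function.mem_support, h] at hk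
    simp [Finset.mem_product, Set.Finite.mem_toFinset, h1, h2]
  rw [finsum_eq_sum_of_support_subset _ hsub,
    finsum_eq_sum_of_support_subset F (s := hF.toFinset) (by simp),
    finsum_eq_sum_of_support_subset G (s := hG.toFinset) (by simp),
    Finset.sum_mul_sum, Finset.sum_product]

/-- the 6-multiple canonical quincunx tight framelet filter bank obtained from a
real double canonical tight 2-framelet filter bank `{a; b₁, b₂, b₃}` and real filters `u₁, u₂`
with `|â|² + |û₁|² + |û₂|² = 1`, together with sum rules and `D₄`-symmetry of the tensor
low-pass filter. -/
theorem stmt_19 (a b₁ b₂ b₃ : ℤ → ℝ)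
    (hafin : (Function.support a).Finite) (hb₁fin : (Function.support b₁).Finite)
    (hb₂fin : (Function.support b₂).Finite) (hb₃fin : (Function.support b₃).Finite)
    (bs us : ℕ → ℤ → ℂ)
    (hbs0 : bs 0 = fun k => (a k : ℂ)) (hbs1 : bs 1 = fun k => (b₁ k : ℂ))
    (hbs2 : bs 2 = fun k => (b₂ k : ℂ)) (hbs3 : bs 3 = fun k => (b₃ k : ℂ))
    (hbank1 : ∀ ω : ℝ, Complex.normSq (fhat1 (bs 0) ω) + Complex.normSq (fhat1 (bs 1) ω)
      + Complex.normSq (fhat1 (bs 2) ω) + Complex.normSq (fhat1 (bs 3) ω) = 1)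
    (hbank2 : ∀ ω : ℝ, (starRingEnd ℂ) (fhat1 (bs 0) ω) * fhat1 (bs 0) (ω + π)
      + (starRingEnd ℂ) (fhat1 (bs 1) ω) * fhat1 (bs 1) (ω + π)
      + (starRingEnd ℂ) (fhat1 (bs 2) ω) * fhat1 (bs 2) (ω + π)
      + (starRingEnd ℂ) (fhat1 (bs 3) ω) * fhat1 (bs 3) (ω + π) = 0)
    (hcan1 : ∀ ω : ℝ, fhat1 (bs 1) ω
      = Complex.exp (-(Complex.I) * (ω : ℂ)) * (starRingEnd ℂ) (fhat1 (bs 0) (ω + π)))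
    (hcan3 : ∀ ω : ℝ, fhat1 (bs 3) ω
      = Complex.exp (-(Complex.I) * (ω : ℂ)) * (starRingEnd ℂ) (fhat1 (bs 2) (ω + π)))
    (u₁ u₂ : ℤ → ℝ)
    (hu₁fin : (Function.support u₁).Finite) (hu₂fin : (Function.support u₂).Finite)
    (hus0 : us 0 = fun k => (a k : ℂ)) (hus1 : us 1 = fun k => (u₁ k : ℂ))
    (hus2 : us 2 = fun k => (u₂ k : ℂ))
    (hsos : ∀ ω : ℝ, Complex.normSq (fhat1 (us 0) ω) + Complex.normSq (fhat1 (us 1) ω)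
      + Complex.normSq (fhat1 (us 2) ω) = 1)
    (B : ℕ → ℕ → ℤ × ℤ → ℂ)
    (hBfin : ∀ j k, (Function.support (B j k)).Finite)
    (hBeven : ∀ j < 2, ∀ k < 3, ∀ ω : ℝ × ℝ,
      fhat2 (B (2 * j) k) ω = fhat1 (bs (2 * j)) ω.1 * fhat1 (us k) ω.2)
    (hBodd : ∀ j < 2, ∀ k < 3, ∀ ω : ℝ × ℝ,
      fhat2 (B (2 * j + 1) k) ω
        = fhat1 (bs (2 * j + 1)) ω.1 * (starRingEnd ℂ) (fhat1 (us k) (ω.2 + π))) :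
    -- the twelve filters (with B 0 0 as low-pass) form a quincunx tight framelet filter bank
    (∀ ω : ℝ × ℝ, ∑ j ∈ Finset.range 4, ∑ k ∈ Finset.range 3,
        Complex.normSq (fhat2 (B j k) ω) = 1) ∧
    (∀ ω : ℝ × ℝ, ∑ j ∈ Finset.range 4, ∑ k ∈ Finset.range 3,
        (starRingEnd ℂ) (fhat2 (B j k) ω) * fhat2 (B j k) (ω.1 + π, ω.2 + π) = 0) ∧
    -- it is 6-multiple canonical
    (∀ j < 2, ∀ k < 3, ∀ ω : ℝ × ℝ,
      fhat2 (B (2 * j + 1) k) ω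
        = Complex.exp (-(Complex.I) * (ω.1 : ℂ)) *
            (starRingEnd ℂ) (fhat2 (B (2 * j) k) (ω.1 + π, ω.2 + π))) ∧
    -- sum rules of the tensor low-pass filter a^{2D} = B 0 0
    (∀ m : ℕ, SumRules1D (fun k => (a k : ℂ)) m → SumRules2D (B 0 0) (2 * m)) ∧
    -- D₄-symmetry of a^{2D} when a is symmetric about c/2
    (∀ c : ℤ, (∀ k : ℤ, a (c - k) = a k) →
      D4Symm (B 0 0) ((c : ℝ) / 2, (c : ℝ) / 2)) := by
  classical
  -- clean instantiations of the tensor structure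
  have E0 : ∀ k < 3, ∀ ω₁ ω₂ : ℝ,
      fhat2 (B 0 k) (ω₁, ω₂) = fhat1 (bs 0) ω₁ * fhat1 (us k) ω₂ := by
    intro k hk ω₁ ω₂
    simpa using hBeven 0 (by norm_num) k hk (ω₁, ω₂)
  have E2 : ∀ k < 3, ∀ ω₁ ω₂ : ℝ,
      fhat2 (B 2 k) (ω₁, ω₂) = fhat1 (bs 2) ω₁ * fhat1 (us k) ω₂ := by
    intro k hk ω₁ ω₂
    simpa using hBeven 1 (by norm_num) k hk (ω₁, ω₂)
  have O1 : ∀ k < 3, ∀ ω₁ ω₂ : ℝ,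
      fhat2 (B 1 k) (ω₁, ω₂) = fhat1 (bs 1) ω₁ * (starRingEnd ℂ) (fhat1 (us k) (ω₂ + π)) := by
    intro k hk ω₁ ω₂
    simpa using hBodd 0 (by norm_num) k hk (ω₁, ω₂)
  have O3 : ∀ k < 3, ∀ ω₁ ω₂ : ℝ,
      fhat2 (B 3 k) (ω₁, ω₂) = fhat1 (bs 3) ω₁ * (starRingEnd ℂ) (fhat1 (us k) (ω₂ + π)) := by
    intro k hk ω₁ ω₂
    simpa using hBodd 1 (by norm_num) k hk (ω₁, ω₂)
  -- the low-pass filter is the tensor product of `a` with itself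
  have hacfin : (Function.support (fun k : ℤ => (a k : ℂ))).Finite := by
    refine hafin.subset fun k hk => ?_
    simp only [Function.mem_support, ne_eq, Complex.ofReal_eq_zero] at hk
    exact hk
  set T : ℤ × ℤ → ℂ := fun k => (a k.1 : ℂ) * (a k.2 : ℂ) with hTdef
  have hTfin : (Function.support T).Finite := by
    refine ((hacfin.prod hacfin).subset fun k hk => ?_)
    have h1 : (a k.1 : ℂ) ≠ 0 := fun h => by simp [hTdef, Function.mem_support, h] at hk
    have h2 : (a k.2 : ℂ) ≠ 0 := fun h => by simp [hTdef, Function.mem_support, h] at hk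
    exact Set.mem_prod.2 ⟨h1, h2⟩
  have hB00 : ∀ k, B 0 0 k = T k := by
    intro k
    have hz : ∀ ω : ℝ × ℝ, fhat2 (fun k => B 0 0 k - T k) ω = 0 := by
      intro ω
      rw [fhat2_sub (hBfin 0 0) hTfin]
      obtain ⟨ω₁, ω₂⟩ := ω
      rw [E0 0 (by norm_num) ω₁ ω₂, hbs0, hus0, hTdef,
        fhat2_tensor _ _ hacfin hacfin, sub_self]
    have hfin : (Function.support (fun k => B 0 0 k - T k)).Finite := by
      refine ((hBfin 0 0).union hTfin).subset fun k hk => ?_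
      by_contra hks
      have h1' : B 0 0 k = 0 := by
        by_contra h; exact hks (Set.mem_union_left _ h)
      have h2' : T k = 0 := by
        by_contra h; exact hks (Set.mem_union_right _ h)
      simp [Function.mem_support, h1', h2'] at hk
    exact sub_eq_zero.1 (fhat2_zero hfin hz k)
  refine ⟨?_, ?_, ?_, ?_, ?_⟩
  · -- tightness identity 1
    rintro ⟨ω₁, ω₂⟩
    simp only [Finset.sum_range_succ, Finset.sum_range_zero, zero_add]
    rw [E0 0 (by norm_num) ω₁ ω₂, E0 1 (by norm_num) ω₁ ω₂, E0 2 (by norm_num) ω₁ ω₂,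
      O1 0 (by norm_num) ω₁ ω₂, O1 1 (by norm_num) ω₁ ω₂, O1 2 (by norm_num) ω₁ ω₂,
      E2 0 (by norm_num) ω₁ ω₂, E2 1 (by norm_num) ω₁ ω₂, E2 2 (by norm_num) ω₁ ω₂,
      O3 0 (by norm_num) ω₁ ω₂, O3 1 (by norm_num) ω₁ ω₂, O3 2 (by norm_num) ω₁ ω₂]
    simp only [Complex.normSq_mul, Complex.normSq_conj]
    have hU := hsos ω₂
    have hV := hsos (ω₂ + π)
    have hA := hbank1 ω₁
    linear_combination (Complex.normSq (fhat1 (bs 0) ω₁) + Complex.normSq (fhat1 (bs 2) ω₁)) * hU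
      + (Complex.normSq (fhat1 (bs 1) ω₁) + Complex.normSq (fhat1 (bs 3) ω₁)) * hV + hA
  · -- tightness identity 2
    rintro ⟨ω₁, ω₂⟩
    simp only [Finset.sum_range_succ, Finset.sum_range_zero, zero_add]
    rw [E0 0 (by norm_num) ω₁ ω₂, E0 1 (by norm_num) ω₁ ω₂, E0 2 (by norm_num) ω₁ ω₂,
      O1 0 (by norm_num) ω₁ ω₂, O1 1 (by norm_num) ω₁ ω₂, O1 2 (by norm_num) ω₁ ω₂,
      E2 0 (by norm_num) ω₁ ω₂, E2 1 (by norm_num) ω₁ ω₂, E2 2 (by norm_num) ω₁ ω₂,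
      O3 0 (by norm_num) ω₁ ω₂, O3 1 (by norm_num) ω₁ ω₂, O3 2 (by norm_num) ω₁ ω₂,
      E0 0 (by norm_num) (ω₁ + π) (ω₂ + π), E0 1 (by norm_num) (ω₁ + π) (ω₂ + π),
      E0 2 (by norm_num) (ω₁ + π) (ω₂ + π),
      O1 0 (by norm_num) (ω₁ + π) (ω₂ + π), O1 1 (by norm_num) (ω₁ + π) (ω₂ + π),
      O1 2 (by norm_num) (ω₁ + π) (ω₂ + π),
      E2 0 (by norm_num) (ω₁ + π) (ω₂ + π), E2 1 (by norm_num) (ω₁ + π) (ω₂ + π),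
      E2 2 (by norm_num) (ω₁ + π) (ω₂ + π),
      O3 0 (by norm_num) (ω₁ + π) (ω₂ + π), O3 1 (by norm_num) (ω₁ + π) (ω₂ + π),
      O3 2 (by norm_num) (ω₁ + π) (ω₂ + π),
      fhat1_per (us 0) ω₂, fhat1_per (us 1) ω₂, fhat1_per (us 2) ω₂]
    simp only [map_mul, Complex.conj_conj]
    linear_combination ((starRingEnd ℂ) (fhat1 (us 0) ω₂) * fhat1 (us 0) (ω₂ + π)
      + (starRingEnd ℂ) (fhat1 (us 1) ω₂) * fhat1 (us 1) (ω₂ + π)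
      + (starRingEnd ℂ) (fhat1 (us 2) ω₂) * fhat1 (us 2) (ω₂ + π)) * hbank2 ω₁
  · -- canonical structure
    rintro j hj k hk ⟨ω₁, ω₂⟩
    interval_cases j
    · show fhat2 (B 1 k) (ω₁, ω₂) = _ * (starRingEnd ℂ) (fhat2 (B 0 k) _)
      rw [O1 k hk ω₁ ω₂, E0 k hk (ω₁ + π) (ω₂ + π), hcan1 ω₁, map_mul]
      ring
    · show fhat2 (B 3 k) (ω₁, ω₂) = _ * (starRingEnd ℂ) (fhat2 (B 2 k) _)
      rw [O3 k hk ω₁ ω₂, E2 k hk (ω₁ + π) (ω₂ + π), hcan3 ω₁, map_mul]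
      ring
  · -- sum rules
    intro m hm
    constructor
    · rw [E0 0 (by norm_num) 0 0, hbs0, hus0, hm.1, one_mul]
    · intro μ hμ
      have hBT : (∑ᶠ k : ℤ × ℤ, ((-1 : ℂ) ^ (k.1 + k.2) * B 0 0 k * (k.1 : ℂ) ^ μ.1
            * (k.2 : ℂ) ^ μ.2))
          = ∑ᶠ k : ℤ × ℤ, (((-1 : ℂ) ^ k.1 * (a k.1 : ℂ) * (k.1 : ℂ) ^ μ.1)
            * ((-1 : ℂ) ^ k.2 * (a k.2 : ℂ) * (k.2 : ℂ) ^ μ.2)) := by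
        refine finsum_congr fun k => ?_
        rw [hB00 k, hTdef, zpow_add₀ (by norm_num : (-1 : ℂ) ≠ 0)]
        ring
      have hFfin : ∀ p : ℕ, (Function.support
          (fun k : ℤ => (-1 : ℂ) ^ k * (a k : ℂ) * (k : ℂ) ^ p)).Finite := by
        intro p
        refine hafin.subset fun k hk => ?_
        simp only [Function.mem_support, ne_eq] at hk ⊢
        intro h0
        exact hk (by simp [h0])
      rw [hBT, finsum_tensor _ _ (hFfin μ.1) (hFfin μ.2)]
      rcases lt_or_ge μ.1 m with h | h
      · rw [hm.2 μ.1 h, zero_mul]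
      · have h2 : μ.2 < m := by omega
        rw [hm.2 μ.2 h2, mul_zero]
  · -- D₄ symmetry
    intro c hsym E hE k k' hk
    have goalT : T k' = T k → B 0 0 k' = B 0 0 k := by
      intro h
      rw [hB00 k', hB00 k]
      exact h
    refine goalT ?_
    have key : ∀ p q : ℤ, (p : ℝ) = (c : ℝ) - q → p = c - q := by
      intro p q h
      exact_mod_cast h
    have key2 : ∀ p q : ℤ, (p : ℝ) = (q : ℝ) → p = q := fun p q h => by exact_mod_cast h
    simp only [D4, Set.mem_insert_iff, Set.mem_singleton_iff] at hE
    have h0 := congrFun hk 0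
    have h1 := congrFun hk 1
    rcases hE with hE | hE | hE | hE | hE | hE | hE | hE
    · subst hE
      simp only [Matrix.cons_mulVec, Matrix.cons_dotProduct, Matrix.dotProduct_of_isEmpty,
        Matrix.cons_val_zero, Matrix.cons_val_one, Matrix.head_cons, Pi.add_apply,
        Matrix.head_cons, Matrix.tail_cons,
        Matrix.cons_val', Matrix.empty_val', Matrix.cons_val_fin_one,
        Matrix.head_fin_const] at h0 h1
      have e1 : k'.1 = k.1 := key2 _ _ (by push_cast at h0 ⊢; linarith)
      have e2 : k'.2 = k.2 := key2 _ _ (by push_cast at h1 ⊢; linarith)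
      show (a k'.1 : ℂ) * (a k'.2 : ℂ) = (a k.1 : ℂ) * (a k.2 : ℂ)
      rw [e1, e2]
      try simp only [hsym]
      try ring
    · subst hE
      simp only [Matrix.cons_mulVec, Matrix.cons_dotProduct, Matrix.dotProduct_of_isEmpty,
        Matrix.cons_val_zero, Matrix.cons_val_one, Matrix.head_cons, Pi.add_apply,
        Matrix.head_cons, Matrix.tail_cons,
        Matrix.cons_val', Matrix.empty_val', Matrix.cons_val_fin_one,
        Matrix.head_fin_const] at h0 h1
      have e1 : k'.1 = c - k.1 := key _ _ (by push_cast at h0 ⊢; linarith)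
      have e2 : k'.2 = c - k.2 := key _ _ (by push_cast at h1 ⊢; linarith)
      show (a k'.1 : ℂ) * (a k'.2 : ℂ) = (a k.1 : ℂ) * (a k.2 : ℂ)
      rw [e1, e2]
      try simp only [hsym]
      try ring
    · subst hE
      simp only [Matrix.cons_mulVec, Matrix.cons_dotProduct, Matrix.dotProduct_of_isEmpty,
        Matrix.cons_val_zero, Matrix.cons_val_one, Matrix.head_cons, Pi.add_apply,
        Matrix.head_cons, Matrix.tail_cons,
        Matrix.cons_val', Matrix.empty_val', Matrix.cons_val_fin_one,
        Matrix.head_fin_const] at h0 h1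
      have e1 : k'.1 = k.1 := key2 _ _ (by push_cast at h0 ⊢; linarith)
      have e2 : k'.2 = c - k.2 := key _ _ (by push_cast at h1 ⊢; linarith)
      show (a k'.1 : ℂ) * (a k'.2 : ℂ) = (a k.1 : ℂ) * (a k.2 : ℂ)
      rw [e1, e2]
      try simp only [hsym]
      try ring
    · subst hE
      simp only [Matrix.cons_mulVec, Matrix.cons_dotProduct, Matrix.dotProduct_of_isEmpty,
        Matrix.cons_val_zero, Matrix.cons_val_one, Matrix.head_cons, Pi.add_apply,
        Matrix.head_cons, Matrix.tail_cons,
        Matrix.cons_val', Matrix.empty_val', Matrix.cons_val_fin_one,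
        Matrix.head_fin_const] at h0 h1
      have e1 : k'.1 = c - k.1 := key _ _ (by push_cast at h0 ⊢; linarith)
      have e2 : k'.2 = k.2 := key2 _ _ (by push_cast at h1 ⊢; linarith)
      show (a k'.1 : ℂ) * (a k'.2 : ℂ) = (a k.1 : ℂ) * (a k.2 : ℂ)
      rw [e1, e2]
      try simp only [hsym]
      try ring
    · subst hE
      simp only [Matrix.cons_mulVec, Matrix.cons_dotProduct, Matrix.dotProduct_of_isEmpty,
        Matrix.cons_val_zero, Matrix.cons_val_one, Matrix.head_cons, Pi.add_apply,
        Matrix.head_cons, Matrix.tail_cons,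
        Matrix.cons_val', Matrix.empty_val', Matrix.cons_val_fin_one,
        Matrix.head_fin_const] at h0 h1
      have e1 : k'.1 = k.2 := key2 _ _ (by push_cast at h0 ⊢; linarith)
      have e2 : k'.2 = k.1 := key2 _ _ (by push_cast at h1 ⊢; linarith)
      show (a k'.1 : ℂ) * (a k'.2 : ℂ) = (a k.1 : ℂ) * (a k.2 : ℂ)
      rw [e1, e2]
      try simp only [hsym]
      try ring
    · subst hE
      simp only [Matrix.cons_mulVec, Matrix.cons_dotProduct, Matrix.dotProduct_of_isEmpty,
        Matrix.cons_val_zero, Matrix.cons_val_one, Matrix.head_cons, Pi.add_apply,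
        Matrix.head_cons, Matrix.tail_cons,
        Matrix.cons_val', Matrix.empty_val', Matrix.cons_val_fin_one,
        Matrix.head_fin_const] at h0 h1
      have e1 : k'.1 = c - k.2 := key _ _ (by push_cast at h0 ⊢; linarith)
      have e2 : k'.2 = c - k.1 := key _ _ (by push_cast at h1 ⊢; linarith)
      show (a k'.1 : ℂ) * (a k'.2 : ℂ) = (a k.1 : ℂ) * (a k.2 : ℂ)
      rw [e1, e2]
      try simp only [hsym]
      try ring
    · subst hE
      simp only [Matrix.cons_mulVec, Matrix.cons_dotProduct, Matrix.dotProduct_of_isEmpty,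
        Matrix.cons_val_zero, Matrix.cons_val_one, Matrix.head_cons, Pi.add_apply,
        Matrix.head_cons, Matrix.tail_cons,
        Matrix.cons_val', Matrix.empty_val', Matrix.cons_val_fin_one,
        Matrix.head_fin_const] at h0 h1
      have e1 : k'.1 = k.2 := key2 _ _ (by push_cast at h0 ⊢; linarith)
      have e2 : k'.2 = c - k.1 := key _ _ (by push_cast at h1 ⊢; linarith)
      show (a k'.1 : ℂ) * (a k'.2 : ℂ) = (a k.1 : ℂ) * (a k.2 : ℂ)
      rw [e1, e2]
      try simp only [hsym]
      try ring
    · subst hE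
      simp only [Matrix.cons_mulVec, Matrix.cons_dotProduct, Matrix.dotProduct_of_isEmpty,
        Matrix.cons_val_zero, Matrix.cons_val_one, Matrix.head_cons, Pi.add_apply,
        Matrix.head_cons, Matrix.tail_cons,
        Matrix.cons_val', Matrix.empty_val', Matrix.cons_val_fin_one,
        Matrix.head_fin_const] at h0 h1
      have e1 : k'.1 = c - k.2 := key _ _ (by push_cast at h0 ⊢; linarith)
      have e2 : k'.2 = k.1 := key2 _ _ (by push_cast at h1 ⊢; linarith)
      show (a k'.1 : ℂ) * (a k'.2 : ℂ) = (a k.1 : ℂ) * (a k.2 : ℂ)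
      rw [e1, e2]
      try simp only [hsym]
      try ring
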